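/- Let u : ℝ × ℝ^m → ℝ be smooth, everywhere positive, ℤ^m-periodic in the spatial variable, with ∂_t u = Δ_x u. Set f = −ln u, w = 2Δf − |∇f|², and E(t) = ∫_{[0,1]^m} |∇f(t,x)|²·u(t,x) dx. Then E is differentiable and E'(t) = ∫_{[0,1]^m} ( ∂_t (u·w)(t,x) − Δ_x (u·w)(t,x) ) dx for every t. -/

import Mathlib

open MeasureTheory
open scoped RealInnerProductSpace

noncomputable section

abbrev E (m : ℕ) := EuclideanSpace ℝ (Fin m)

/-- The standard orthonormal basis of `ℝ^m`. -/
def eE (m : ℕ) (a : Fin m) : E m := EuclideanSpace.single a 1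

/-- Second Fréchet derivative as a bilinear form. -/
def D2E (m : ℕ) (g : E m → ℝ) (x X Y : E m) : ℝ := iteratedFDeriv ℝ 2 g x ![X, Y]

/-- The Laplacian `Δg(x) = Σ_a D²g(x)[e_a, e_a]`. -/
def lapE (m : ℕ) (g : E m → ℝ) (x : E m) : ℝ := ∑ a, D2E m g x (eE m a) (eE m a)

/-- The unit cube `[0,1]^m`. -/
def cube (m : ℕ) : Set (E m) := {x | ∀ i, x i ∈ Set.Icc (0 : ℝ) 1}

/-- The vector of `ℤ^m ⊂ ℝ^m` with integer coordinates `k`. -/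
def latt (m : ℕ) (k : Fin m → ℤ) : E m := WithLp.toLp 2 (fun i => (k i : ℝ))

open scoped ContDiff

lemma infty_add_one_le : ∞ + 1 ≤ ∞ := by
  have : ((⊤ : ℕ∞) : WithTop ℕ∞) + ((1 : ℕ∞) : WithTop ℕ∞) ≤ ((⊤ : ℕ∞) : WithTop ℕ∞) := by
    exact_mod_cast le_top
  simpa using this

lemma one_le_infty : (1 : WithTop ℕ∞) ≤ ∞ := by
  have : ((1 : ℕ∞) : WithTop ℕ∞) ≤ ((⊤ : ℕ∞) : WithTop ℕ∞) := by exact_mod_cast le_top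
  simpa using this

lemma two_le_infty : (2 : WithTop ℕ∞) ≤ ∞ := by
  have : ((2 : ℕ∞) : WithTop ℕ∞) ≤ ((⊤ : ℕ∞) : WithTop ℕ∞) := by exact_mod_cast le_top
  simpa using this

lemma infty_ne_zero' : (∞ : WithTop ℕ∞) ≠ 0 := by simp

/-! ### Auxiliary machinery: directional derivatives -/

section pd

variable {X : Type*} [NormedAddCommGroup X] [NormedSpace ℝ X]

/-- Directional derivative operator. -/
def pd (v : X) (H : X → ℝ) : X → ℝ := fun p => fderiv ℝ H p v

lemma pd_contDiff {H : X → ℝ} (hH : ContDiff ℝ ∞ H) (v : X) :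
    ContDiff ℝ ∞ (pd v H) :=
  (hH.fderiv_right infty_add_one_le).clm_apply contDiff_const

lemma pd_swap {H : X → ℝ} (hH : ContDiff ℝ ∞ H) (v w : X) (p : X) :
    pd v (pd w H) p = pd w (pd v H) p := by
  have hd : Differentiable ℝ (fderiv ℝ H) := (hH.fderiv_right infty_add_one_le).differentiable infty_ne_zero'
  have h1 : ∀ v w : X, pd v (pd w H) p = fderiv ℝ (fderiv ℝ H) p v w := by
    intro v w
    show fderiv ℝ (fun q => fderiv ℝ H q w) p v = _
    rw [fderiv_clm_apply (hd p) (differentiableAt_const w)]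
    simp
  rw [h1, h1]
  exact (hH.contDiffAt.isSymmSndFDerivAt (by simpa using two_le_infty)) v w

lemma pd_sub {g1 g2 : X → ℝ} (h1 : ContDiff ℝ ∞ g1) (h2 : ContDiff ℝ ∞ g2)
    (v : X) (p : X) :
    pd v (fun q => g1 q - g2 q) p = pd v g1 p - pd v g2 p := by
  rw [pd, fderiv_fun_sub (h1.differentiable infty_ne_zero' p) (h2.differentiable infty_ne_zero' p)]
  rfl

lemma pd_const_mul {g : X → ℝ} (h : ContDiff ℝ ∞ g) (c : ℝ) (v : X) (p : X) :
    pd v (fun q => c * g q) p = c * pd v g p := by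
  rw [pd, fderiv_const_mul (h.differentiable infty_ne_zero' p)]
  rfl

lemma pd_sum {ι : Type*} (s : Finset ι) {g : ι → X → ℝ} (h : ∀ i, ContDiff ℝ ∞ (g i))
    (v : X) (p : X) :
    pd v (fun q => ∑ i ∈ s, g i q) p = ∑ i ∈ s, pd v (g i) p := by
  rw [pd, fderiv_fun_sum (fun i _ => ((h i).differentiable infty_ne_zero' p))]
  simp [pd]

lemma pd_negLog {Φ : X → ℝ} (hΦ : ContDiff ℝ ∞ Φ) (hpos : ∀ p, 0 < Φ p)
    (v : X) (p : X) :
    pd v (fun q => -Real.log (Φ q)) p = -((Φ p)⁻¹ * pd v Φ p) := by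
  have h1 : HasFDerivAt (fun q => Real.log (Φ q)) ((Φ p)⁻¹ • fderiv ℝ Φ p) p :=
    (Real.hasDerivAt_log (hpos p).ne').comp_hasFDerivAt p
      (hΦ.differentiable infty_ne_zero' p).hasFDerivAt
  have h2 := h1.fun_neg
  rw [pd, h2.fderiv]
  simp [pd, mul_comm]

lemma pd_pd_negLog {Φ : X → ℝ} (hΦ : ContDiff ℝ ∞ Φ) (hpos : ∀ p, 0 < Φ p)
    (v w : X) (p : X) :
    pd w (pd v (fun q => -Real.log (Φ q))) p
      = ((Φ p)^2)⁻¹ * (pd w Φ p * pd v Φ p) - (Φ p)⁻¹ * pd w (pd v Φ) p := by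
  set A : X → ℝ := pd v Φ with hA_def
  have hA : ContDiff ℝ ∞ A := pd_contDiff hΦ v
  have heq : pd v (fun q => -Real.log (Φ q)) = fun q => -((Φ q)⁻¹ * A q) :=
    funext fun q => pd_negLog hΦ hpos v q
  have h1 : HasFDerivAt (fun q => (Φ q)⁻¹) (-((Φ p)^2)⁻¹ • fderiv ℝ Φ p) p :=
    (hasDerivAt_inv (hpos p).ne').comp_hasFDerivAt p
      (hΦ.differentiable infty_ne_zero' p).hasFDerivAt
  have h2 : HasFDerivAt A (fderiv ℝ A p) p := (hA.differentiable infty_ne_zero' p).hasFDerivAt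
  have h3 := (h1.fun_mul h2).fun_neg
  rw [heq, pd, h3.fderiv]
  show -((Φ p)⁻¹ * (fderiv ℝ A p) w + A p * ((-((Φ p)^2)⁻¹ • fderiv ℝ Φ p) w)) = _
  simp only [ContinuousLinearMap.smul_apply, smul_eq_mul]
  show -((Φ p)⁻¹ * pd w A p + A p * (-((Φ p)^2)⁻¹ * pd w Φ p)) = _
  ring

lemma pd_periodic {H : X → ℝ} (hH : ContDiff ℝ ∞ H) (c : X)
    (hc : ∀ q, H (q + c) = H q) (v p : X) :
    pd v H (p + c) = pd v H p := by
  have h1 : HasFDerivAt (fun q : X => q + c) (ContinuousLinearMap.id ℝ X) p :=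
    (hasFDerivAt_id p).add_const c
  have h2 : HasFDerivAt (fun q => H (q + c)) ((fderiv ℝ H (p + c)).comp
      (ContinuousLinearMap.id ℝ X)) p :=
    (hH.differentiable infty_ne_zero' (p + c)).hasFDerivAt.comp p h1
  have h3 : HasFDerivAt H (fderiv ℝ H (p + c)) p := by
    have := h2
    rw [funext hc] at this
    simpa using this
  rw [pd, pd, h3.fderiv]

end pd

section slices

variable {m : ℕ}

lemma contDiff_sliceT {H : ℝ × E m → ℝ} (hH : ContDiff ℝ ∞ H) (x : E m) :
    ContDiff ℝ ∞ (fun s : ℝ => H (s, x)) :=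
  hH.comp (contDiff_id.prodMk contDiff_const)

lemma contDiff_sliceX {H : ℝ × E m → ℝ} (hH : ContDiff ℝ ∞ H) (t : ℝ) :
    ContDiff ℝ ∞ (fun y : E m => H (t, y)) :=
  hH.comp (contDiff_const.prodMk contDiff_id)

lemma hasDerivAt_sliceT {H : ℝ × E m → ℝ} (hH : ContDiff ℝ ∞ H) (x : E m) (t : ℝ) :
    HasDerivAt (fun s : ℝ => H (s, x)) (pd ((1 : ℝ), (0 : E m)) H (t, x)) t := by
  have h1 : HasFDerivAt (fun s : ℝ => (s, x))
      ((ContinuousLinearMap.id ℝ ℝ).prod (0 : ℝ →L[ℝ] E m)) t :=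
    (hasFDerivAt_id t).prodMk (hasFDerivAt_const x t)
  have h2 := ((hH.differentiable infty_ne_zero' (t, x)).hasFDerivAt.comp t h1).hasDerivAt
  simpa [pd, Function.comp_def] using h2

lemma deriv_sliceT {H : ℝ × E m → ℝ} (hH : ContDiff ℝ ∞ H) (x : E m) (t : ℝ) :
    deriv (fun s : ℝ => H (s, x)) t = pd ((1 : ℝ), (0 : E m)) H (t, x) :=
  (hasDerivAt_sliceT hH x t).deriv

lemma fderiv_sliceX {H : ℝ × E m → ℝ} (hH : ContDiff ℝ ∞ H) (t : ℝ) (x : E m) (Y : E m) :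
    fderiv ℝ (fun y : E m => H (t, y)) x Y = pd ((0 : ℝ), Y) H (t, x) := by
  have h1 : HasFDerivAt (fun y : E m => ((t : ℝ), y))
      ((0 : E m →L[ℝ] ℝ).prod (ContinuousLinearMap.id ℝ (E m))) x :=
    (hasFDerivAt_const t x).prodMk (hasFDerivAt_id x)
  have h2 : HasFDerivAt (fun y : E m => H (t, y))
      ((fderiv ℝ H (t, x)).comp ((0 : E m →L[ℝ] ℝ).prod (ContinuousLinearMap.id ℝ (E m)))) x :=
    (hH.differentiable infty_ne_zero' (t, x)).hasFDerivAt.comp x h1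
  rw [h2.fderiv]
  simp [pd]

lemma D2_sliceX {H : ℝ × E m → ℝ} (hH : ContDiff ℝ ∞ H) (t : ℝ) (x X Y : E m) :
    D2E m (fun y : E m => H (t, y)) x X Y = pd ((0 : ℝ), X) (pd ((0 : ℝ), Y) H) (t, x) := by
  set g : E m → ℝ := fun y => H (t, y) with hg_def
  have hg : ContDiff ℝ ∞ g := contDiff_sliceX hH t
  have hgd : Differentiable ℝ (fderiv ℝ g) := (hg.fderiv_right infty_add_one_le).differentiable infty_ne_zero'
  rw [D2E, iteratedFDeriv_two_apply]
  have h1 : fderiv ℝ (fderiv ℝ g) x (![X,Y] 0) (![X,Y] 1)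
      = fderiv ℝ (fun y => fderiv ℝ g y Y) x X := by
    rw [fderiv_clm_apply (hgd x) (differentiableAt_const Y)]
    simp
  rw [h1]
  have h2 : (fun y => fderiv ℝ g y Y) = fun y => pd ((0 : ℝ), Y) H (t, y) :=
    funext fun y => fderiv_sliceX hH t y Y
  rw [h2, fderiv_sliceX (pd_contDiff hH _) t x X]

lemma lap_sliceX {H : ℝ × E m → ℝ} (hH : ContDiff ℝ ∞ H) (t : ℝ) (x : E m) :
    lapE m (fun y : E m => H (t, y)) x
      = ∑ a, pd ((0 : ℝ), eE m a) (pd ((0 : ℝ), eE m a) H) (t, x) := by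
  unfold lapE
  exact Finset.sum_congr rfl fun a _ => D2_sliceX hH t x _ _

lemma lapE_eq {g : E m → ℝ} (hg : ContDiff ℝ ∞ g) (x : E m) :
    lapE m g x = ∑ a, pd (eE m a) (pd (eE m a) g) x := by
  have hgd : Differentiable ℝ (fderiv ℝ g) := (hg.fderiv_right infty_add_one_le).differentiable infty_ne_zero'
  unfold lapE
  refine Finset.sum_congr rfl fun a _ => ?_
  rw [D2E, iteratedFDeriv_two_apply]
  have h1 : fderiv ℝ (fderiv ℝ g) x (![eE m a, eE m a] 0) (![eE m a, eE m a] 1)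
      = fderiv ℝ (fun y => fderiv ℝ g y (eE m a)) x (eE m a) := by
    rw [fderiv_clm_apply (hgd x) (differentiableAt_const (eE m a))]
    simp
  rw [h1]
  rfl

lemma grad_norm_sq (g : E m → ℝ) (x : E m) :
    ‖gradient g x‖ ^ 2 = ∑ a, (fderiv ℝ g x (eE m a)) ^ 2 := by
  have hcomp : ∀ a : Fin m, fderiv ℝ g x (eE m a) = gradient g x a := by
    intro a
    have h1 : ⟪gradient g x, eE m a⟫ = fderiv ℝ g x (eE m a) := by
      rw [gradient]
      exact InnerProductSpace.toDual_symm_apply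
    rw [← h1, eE, EuclideanSpace.inner_single_right]
    simp
  have hnorm : ‖gradient g x‖ ^ 2 = ∑ a, (gradient g x a) ^ 2 := by
    rw [EuclideanSpace.norm_eq, Real.sq_sqrt (by positivity)]
    simp [sq_abs]
  rw [hnorm]
  exact Finset.sum_congr rfl fun a _ => by rw [hcomp]

end slices

section cube

variable {m : ℕ}

lemma cube_eq_preimage :
    cube m = (EuclideanSpace.equiv (Fin m) ℝ) ⁻¹'
      (Set.Icc (0 : Fin m → ℝ) 1) := by
  ext x
  simp only [cube, Set.mem_setOf_eq, Set.mem_preimage, Set.mem_Icc, Pi.le_def, Set.mem_Icc]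
  constructor
  · intro h
    exact ⟨fun i => (h i).1, fun i => (h i).2⟩
  · intro h i
    exact ⟨h.1 i, h.2 i⟩

lemma isCompact_cube : IsCompact (cube m) := by
  rw [cube_eq_preimage]
  have h : IsCompact (Set.Icc (0 : Fin m → ℝ) 1) := isCompact_Icc
  have := h.image_of_continuousOn
    ((EuclideanSpace.equiv (Fin m) ℝ).symm.continuous.continuousOn)
  convert this using 1
  ext x
  simp only [Set.mem_preimage, Set.mem_image]
  constructor
  · intro hx
    exact ⟨EuclideanSpace.equiv (Fin m) ℝ x, hx, by simp⟩
  · rintro ⟨y, hy, rfl⟩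
    exact hy

lemma measurableSet_cube : MeasurableSet (cube m) :=
  isCompact_cube.isClosed.measurableSet

end cube

section divergence

lemma integral_lap_periodic {m : ℕ} {g : E m → ℝ} (hg : ContDiff ℝ ∞ g)
    (hper : ∀ (y : E m) (k : Fin m → ℤ), g (y + latt m k) = g y) :
    ∫ x in cube m, lapE m g x = 0 := by
  cases m with
  | zero =>
      have : ∀ x : E 0, lapE 0 g x = 0 := by intro x; simp [lapE]
      simp [this]
  | succ n =>
      set eL : E (n + 1) ≃L[ℝ] (Fin (n + 1) → ℝ) := EuclideanSpace.equiv (Fin (n + 1)) ℝ with heL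
      have hvol : MeasurePreserving (⇑eL) volume volume :=
        EuclideanSpace.volume_preserving_symm_measurableEquiv_toLp (Fin (n + 1))
      have hemb : MeasurableEmbedding (⇑eL) := eL.toHomeomorph.measurableEmbedding
      have hsymm_apply : ∀ (v : Fin (n + 1) → ℝ) (j : Fin (n + 1)), eL.symm v j = v j :=
        fun v j => rfl
      set f : Fin (n + 1) → (Fin (n + 1) → ℝ) → ℝ :=
        fun i y => pd (eE (n + 1) i) g (eL.symm y) with hfdef
      set f' : Fin (n + 1) → (Fin (n + 1) → ℝ) → (Fin (n + 1) → ℝ) →L[ℝ] ℝ :=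
        fun i y => (fderiv ℝ (pd (eE (n + 1) i) g) (eL.symm y)).comp
          (eL.symm : (Fin (n + 1) → ℝ) →L[ℝ] E (n + 1)) with hf'def
      have hsingle : ∀ i, eL.symm (Pi.single i 1) = eE (n + 1) i := by
        intro i
        ext j
        rw [hsymm_apply]
        simp [eE, EuclideanSpace.single_apply, Pi.single_apply]
      have happly : ∀ i y, f' i y (Pi.single i 1)
          = pd (eE (n + 1) i) (pd (eE (n + 1) i) g) (eL.symm y) := by
        intro i y
        show fderiv ℝ (pd (eE (n + 1) i) g) (eL.symm y) (eL.symm (Pi.single i 1)) = _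
        rw [hsingle]
        rfl
      have key := MeasureTheory.integral_divergence_of_hasFDerivAt_off_countable'
        (0 : Fin (n + 1) → ℝ) (1 : Fin (n + 1) → ℝ)
        (by intro i; exact zero_le_one) f f' ∅ Set.countable_empty
        (fun i => (((pd_contDiff hg (eE (n + 1) i)).continuous).comp
          eL.symm.continuous).continuousOn)
        (fun x _ i => ((pd_contDiff hg (eE (n + 1) i)).differentiable infty_ne_zero'
          (eL.symm x)).hasFDerivAt.comp x eL.symm.hasFDerivAt)
        (by
          have hcont : Continuous (fun x : Fin (n + 1) → ℝ => ∑ i, f' i x (Pi.single i 1)) := by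
            refine continuous_finset_sum _ fun i _ => ?_
            have : (fun x : Fin (n + 1) → ℝ => f' i x (Pi.single i 1))
                = fun x => pd (eE (n + 1) i) (pd (eE (n + 1) i) g) (eL.symm x) :=
              funext fun x => happly i x
            rw [this]
            exact ((pd_contDiff (pd_contDiff hg _) _).continuous).comp eL.symm.continuous
          exact hcont.continuousOn.integrableOn_compact isCompact_Icc)
      -- RHS is zero by periodicity
      have hper' : ∀ (i : Fin (n + 1)) (x : Fin n → ℝ),
          f i (i.insertNth (1 : ℝ) x) = f i (i.insertNth (0 : ℝ) x) := by
        intro i x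
        set k : Fin (n + 1) → ℤ := fun j => if j = i then 1 else 0 with hk
        have hxy : eL.symm (i.insertNth (1 : ℝ) x)
            = eL.symm (i.insertNth (0 : ℝ) x) + latt (n + 1) k := by
          ext j
          have hadd : (eL.symm (i.insertNth (0 : ℝ) x) + latt (n + 1) k) j
              = eL.symm (i.insertNth (0 : ℝ) x) j + ((k j : ℤ) : ℝ) := rfl
          rw [hsymm_apply, hadd, hsymm_apply]
          refine Fin.succAboveCases i ?_ ?_ j
          · simp [hk, Fin.insertNth_apply_same]
          · intro j'
            simp [hk, Fin.insertNth_apply_succAbove, Fin.succAbove_ne i j']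
        show pd (eE (n + 1) i) g (eL.symm (i.insertNth (1 : ℝ) x)) = _
        rw [hxy, pd_periodic hg (latt (n + 1) k) (fun y => hper y k)]
      have hrhs : (∑ i : Fin (n + 1),
          ((∫ x in Set.Icc ((0 : Fin (n+1) → ℝ) ∘ i.succAbove) ((1 : Fin (n+1) → ℝ) ∘ i.succAbove),
            f i (i.insertNth ((1 : Fin (n+1) → ℝ) i) x)) -
          ∫ x in Set.Icc ((0 : Fin (n+1) → ℝ) ∘ i.succAbove) ((1 : Fin (n+1) → ℝ) ∘ i.succAbove),
            f i (i.insertNth ((0 : Fin (n+1) → ℝ) i) x))) = 0 := by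
        refine Finset.sum_eq_zero fun i _ => ?_
        rw [sub_eq_zero]
        refine integral_congr_ae (Filter.EventuallyEq.of_eq (funext fun x => ?_))
        simpa using hper' i x
      rw [hrhs] at key
      -- transport the integral
      have hlap : ∀ y : Fin (n + 1) → ℝ,
          (∑ i, f' i y (Pi.single i 1)) = lapE (n + 1) g (eL.symm y) := by
        intro y
        rw [lapE_eq hg]
        exact Finset.sum_congr rfl fun i _ => happly i y
      have htrans : ∫ x in cube (n + 1), lapE (n + 1) g x
          = ∫ y in Set.Icc (0 : Fin (n+1) → ℝ) 1, lapE (n + 1) g (eL.symm y) := by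
        rw [← hvol.setIntegral_preimage_emb hemb (fun y => lapE (n + 1) g (eL.symm y))
          (Set.Icc (0 : Fin (n+1) → ℝ) 1)]
        rw [← cube_eq_preimage]
        refine setIntegral_congr_fun measurableSet_cube fun x _ => ?_
        rw [eL.symm_apply_apply]
      rw [htrans, ← integral_congr_ae (Filter.EventuallyEq.of_eq (funext hlap)), key]

end divergence

section domderiv

lemma hasDerivAt_integral_cube {m : ℕ} {G : ℝ × E m → ℝ} (hG : ContDiff ℝ ∞ G) (t : ℝ) :
    HasDerivAt (fun s => ∫ x in cube m, G (s, x))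
      (∫ x in cube m, pd ((1 : ℝ), (0 : E m)) G (t, x)) t := by
  set G' : ℝ × E m → ℝ := pd ((1 : ℝ), (0 : E m)) G with hG'def
  have hG' : ContDiff ℝ ∞ G' := pd_contDiff hG _
  obtain ⟨C, hC⟩ := (isCompact_Icc (a := t - 1) (b := t + 1)).prod
    (isCompact_cube (m := m)) |>.exists_bound_of_continuousOn hG'.continuous.continuousOn
  have hslice_cont : ∀ s : ℝ, Continuous fun x : E m => G (s, x) :=
    fun s => hG.continuous.comp (continuous_const.prodMk continuous_id)
  have hslice_cont' : ∀ s : ℝ, Continuous fun x : E m => G' (s, x) :=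
    fun s => hG'.continuous.comp (continuous_const.prodMk continuous_id)
  refine (hasDerivAt_integral_of_dominated_loc_of_deriv_le
    (F := fun s x => G (s, x)) (F' := fun s x => G' (s, x)) (bound := fun _ => C)
    (μ := volume.restrict (cube m)) (Metric.ball_mem_nhds t one_pos)
    (Filter.Eventually.of_forall fun s => (hslice_cont s).aestronglyMeasurable)
    ((hslice_cont t).continuousOn.integrableOn_compact isCompact_cube)
    ((hslice_cont' t).aestronglyMeasurable)
    ?_ ?_ ?_).2
  · filter_upwards [ae_restrict_mem measurableSet_cube] with x hx
    intro s hs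
    refine hC (s, x) ⟨?_, hx⟩
    have : |s - t| < 1 := by simpa [Real.dist_eq] using hs
    constructor
    · linarith [abs_lt.1 this |>.1]
    · linarith [abs_lt.1 this |>.2]
  · exact integrableOn_const isCompact_cube.measure_lt_top.ne
  · exact Filter.Eventually.of_forall fun x s _ => hasDerivAt_sliceT hG x s

end domderiv

section key
variable {X : Type*} [NormedAddCommGroup X] [NormedSpace ℝ X]

lemma uw_key {Φ : X → ℝ} (hΦ : ContDiff ℝ ∞ Φ) (hpos : ∀ p, 0 < Φ p)
    {ι : Type*} [Fintype ι] (v : ι → X) (p : X) :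
    Φ p * (2 * (∑ a, pd (v a) (pd (v a) (fun q => -Real.log (Φ q))) p)
      - ∑ a, (pd (v a) (fun q => -Real.log (Φ q)) p) ^ 2)
    = (∑ a, (pd (v a) (fun q => -Real.log (Φ q)) p) ^ 2) * Φ p
      - 2 * ∑ a, pd (v a) (pd (v a) Φ) p := by
  have hne : Φ p ≠ 0 := (hpos p).ne'
  simp only [pd_negLog hΦ hpos, pd_pd_negLog hΦ hpos]
  set d : ι → ℝ := fun a => pd (v a) Φ p with hd
  set D2 : ι → ℝ := fun a => pd (v a) (pd (v a) Φ) p with hD2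
  have hs1 : ∑ a, (-((Φ p)⁻¹ * d a)) ^ 2 = ((Φ p)⁻¹) ^ 2 * ∑ a, (d a) ^ 2 := by
    rw [Finset.mul_sum]
    exact Finset.sum_congr rfl fun a _ => by ring
  have hs2 : ∑ a, (((Φ p) ^ 2)⁻¹ * (d a * d a) - (Φ p)⁻¹ * D2 a)
      = ((Φ p) ^ 2)⁻¹ * (∑ a, (d a) ^ 2) - (Φ p)⁻¹ * ∑ a, D2 a := by
    rw [Finset.sum_sub_distrib, Finset.mul_sum, Finset.mul_sum]
    congr 1
    exact Finset.sum_congr rfl fun a _ => by ring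
  rw [hs1, hs2]
  field_simp
  ring
end key
/-- for a positive periodic solution of the heat equation, the entropy
energy `E(t) = ∫ |∇f|² u` (`f = −ln u`, `w = 2Δf − |∇f|²`) satisfies
`E'(t) = ∫ (∂_t − Δ)(u w)`. -/
theorem energy_deriv_uw (m : ℕ) (u : ℝ → E m → ℝ)
    (hu : ContDiff ℝ (⊤ : ℕ∞) (Function.uncurry u)) (hpos : ∀ t x, 0 < u t x)
    (hper : ∀ (t : ℝ) (x : E m) (k : Fin m → ℤ), u t (x + latt m k) = u t x)
    (hheat : ∀ t x, deriv (fun s => u s x) t = lapE m (u t) x)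
    (f w : ℝ → E m → ℝ) (hf : f = fun t x => -Real.log (u t x))
    (hw : w = fun t x => 2 * lapE m (f t) x - ‖gradient (f t) x‖ ^ 2)
    (Ent : ℝ → ℝ)
    (hE : Ent = fun t => ∫ x in cube m, ‖gradient (f t) x‖ ^ 2 * u t x)
    (t : ℝ) :
    HasDerivAt Ent
      (∫ x in cube m,
        (deriv (fun s => u s x * w s x) t - lapE m (fun y => u t y * w t y) x)) t := by
  have hΦ : ContDiff ℝ ∞ (Function.uncurry u) := hu
  set Φ : ℝ × E m → ℝ := Function.uncurry u with hΦdef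
  have hΦpos : ∀ p : ℝ × E m, 0 < Φ p := fun p => hpos p.1 p.2
  set F : ℝ × E m → ℝ := fun p => -Real.log (Φ p) with hFdef
  have hF : ContDiff ℝ ∞ F := (hΦ.log fun p => (hΦpos p).ne').neg
  set va : Fin m → ℝ × E m := fun a => ((0 : ℝ), eE m a) with hvadef
  set vt : ℝ × E m := ((1 : ℝ), (0 : E m)) with hvtdef
  set GG : ℝ × E m → ℝ := fun p => (∑ a, (pd (va a) F p) ^ 2) * Φ p with hGGdef
  have hGG : ContDiff ℝ ∞ GG :=
    (ContDiff.sum fun a _ => (pd_contDiff hF _).pow 2).mul hΦ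
  set DD : ℝ × E m → ℝ := fun p => ∑ a, pd (va a) (pd (va a) Φ) p with hDDdef
  have hDD : ContDiff ℝ ∞ DD :=
    ContDiff.sum fun a _ => pd_contDiff (pd_contDiff hΦ _) _
  set W : ℝ × E m → ℝ :=
    fun p => 2 * (∑ a, pd (va a) (pd (va a) F) p) - ∑ a, (pd (va a) F p) ^ 2 with hWdef
  have hWsm : ContDiff ℝ ∞ W :=
    (contDiff_const.mul (ContDiff.sum fun a _ => pd_contDiff (pd_contDiff hF _) _)).sub
      (ContDiff.sum fun a _ => (pd_contDiff hF _).pow 2)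
  set UW : ℝ × E m → ℝ := fun p => Φ p * W p with hUWdef
  have hUW : ContDiff ℝ ∞ UW := hΦ.mul hWsm
  -- identification of w with W
  have hw_eq : ∀ (s : ℝ) (x : E m), w s x = W (s, x) := by
    intro s x
    rw [hw]
    show 2 * lapE m (f s) x - ‖gradient (f s) x‖ ^ 2 = W (s, x)
    rw [hf]
    show 2 * lapE m (fun y => F (s, y)) x - ‖gradient (fun y => F (s, y)) x‖ ^ 2 = W (s, x)
    rw [lap_sliceX hF, grad_norm_sq]
    simp only [fderiv_sliceX hF]
    rfl
  -- Claim A : UW = GG - 2 DD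
  have hUWeq : UW = fun p => GG p - 2 * DD p := by
    funext p
    show Φ p * W p = GG p - 2 * DD p
    exact uw_key hΦ hΦpos va p
  -- heat equation in directional-derivative form
  have hheatP : pd vt Φ = DD := by
    funext p
    obtain ⟨s, y⟩ := p
    have h1 : pd vt Φ (s, y) = deriv (fun r => u r y) s :=
      (deriv_sliceT hΦ y s).symm
    rw [h1, hheat s y]
    have h2 : u s = fun z => Φ (s, z) := rfl
    rw [h2, lap_sliceX hΦ]
  -- commutation of time derivative and Laplacian of DD
  have hcomm : ∀ p : ℝ × E m, pd vt DD p = ∑ a, pd (va a) (pd (va a) DD) p := by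
    intro p
    have h1 : pd vt DD p = ∑ a, pd vt (pd (va a) (pd (va a) Φ)) p := by
      have h0 : DD = fun q => ∑ a, pd (va a) (pd (va a) Φ) q := rfl
      rw [h0, pd_sum Finset.univ (fun a => pd_contDiff (pd_contDiff hΦ _) _) vt p]
    rw [h1]
    refine Finset.sum_congr rfl fun a _ => ?_
    rw [pd_swap (pd_contDiff hΦ _) vt (va a) p]
    have h2 : pd vt (pd (va a) Φ) = pd (va a) (pd vt Φ) :=
      funext fun q => pd_swap hΦ vt (va a) q
    rw [h2, hheatP]
  -- pointwise integrand identity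
  have hintegrand : ∀ x : E m,
      deriv (fun s => u s x * w s x) t - lapE m (fun y => u t y * w t y) x
        = pd vt GG (t, x) - lapE m (fun y => GG (t, y)) x := by
    intro x
    have h1 : (fun s => u s x * w s x) = fun s => UW (s, x) := by
      funext s; rw [hw_eq]; rfl
    have h2 : (fun y => u t y * w t y) = fun y : E m => UW (t, y) := by
      funext y; rw [hw_eq]; rfl
    rw [h1, h2, deriv_sliceT hUW x t, lap_sliceX hUW, lap_sliceX hGG]
    have hUWd : ∀ (v' : ℝ × E m) (q : ℝ × E m),
        pd v' UW q = pd v' GG q - 2 * pd v' DD q := by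
      intro v' q
      rw [hUWeq, pd_sub hGG (contDiff_const.mul hDD) v' q, pd_const_mul hDD 2 v' q]
    have hUWd' : ∀ v' : ℝ × E m, pd v' UW = fun q => pd v' GG q - 2 * pd v' DD q :=
      fun v' => funext (hUWd v')
    have h3 : ∀ (a : Fin m) (q : ℝ × E m), pd (va a) (pd (va a) UW) q
        = pd (va a) (pd (va a) GG) q - 2 * pd (va a) (pd (va a) DD) q := by
      intro a q
      rw [hUWd' (va a),
        pd_sub (pd_contDiff hGG _) (contDiff_const.mul (pd_contDiff hDD _)) _ q,
        pd_const_mul (pd_contDiff hDD _) 2 _ q]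
    rw [hUWd vt (t, x)]
    simp only [hvadef] at h3
    simp only [h3]
    rw [Finset.sum_sub_distrib, ← Finset.mul_sum, hcomm (t, x)]
    ring
  -- rewriting the energy
  have hpt : ∀ (s : ℝ) (x : E m), ‖gradient (f s) x‖ ^ 2 * u s x = GG (s, x) := by
    intro s x
    rw [hf]
    show ‖gradient (fun y => F (s, y)) x‖ ^ 2 * u s x = GG (s, x)
    rw [grad_norm_sq]
    simp only [fderiv_sliceX hF]
    rfl
  have hEnt : Ent = fun s => ∫ x in cube m, GG (s, x) := by
    rw [hE]
    funext s
    simp only [hpt]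
  -- differentiation under the integral sign
  have hder := hasDerivAt_integral_cube hGG t
  rw [hEnt]
  -- identify the derivative value
  have hInt1 : IntegrableOn (fun x : E m => pd vt GG (t, x)) (cube m) :=
    ((pd_contDiff hGG vt).continuous.comp
      (continuous_const.prodMk continuous_id)).continuousOn.integrableOn_compact
      isCompact_cube
  have hInt2 : IntegrableOn (fun x : E m => lapE m (fun y => GG (t, y)) x) (cube m) := by
    have hl : (fun x : E m => lapE m (fun y => GG (t, y)) x)
        = fun x => ∑ a, pd (va a) (pd (va a) GG) (t, x) :=
      funext fun x => lap_sliceX hGG t x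
    rw [hl]
    exact (continuous_finset_sum _ fun a _ =>
      (pd_contDiff (pd_contDiff hGG _) _).continuous.comp
        (continuous_const.prodMk continuous_id)).continuousOn.integrableOn_compact
      isCompact_cube
  have hGGper : ∀ (y : E m) (k : Fin m → ℤ), GG (t, y + latt m k) = GG (t, y) := by
    intro y k
    have hc : ∀ q : ℝ × E m, Φ (q + ((0 : ℝ), latt m k)) = Φ q := by
      intro q
      show u (q.1 + 0) (q.2 + latt m k) = u q.1 q.2
      rw [add_zero, hper]
    have hcF : ∀ q : ℝ × E m, F (q + ((0 : ℝ), latt m k)) = F q := by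
      intro q
      show -Real.log (Φ (q + ((0 : ℝ), latt m k))) = -Real.log (Φ q)
      rw [hc]
    have hptq : ((t : ℝ), y + latt m k) = ((t, y) + (((0 : ℝ), latt m k)) : ℝ × E m) := by
      simp [Prod.ext_iff]
    show (∑ a, (pd (va a) F (t, y + latt m k)) ^ 2) * Φ (t, y + latt m k)
      = (∑ a, (pd (va a) F (t, y)) ^ 2) * Φ (t, y)
    rw [hptq]
    simp only [pd_periodic hF ((0 : ℝ), latt m k) hcF]
    rw [hc]
  have hzero : ∫ x in cube m, lapE m (fun y => GG (t, y)) x = 0 :=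
    integral_lap_periodic (contDiff_sliceX hGG t) hGGper
  have hval : (∫ x in cube m,
      (deriv (fun s => u s x * w s x) t - lapE m (fun y => u t y * w t y) x))
      = ∫ x in cube m, pd vt GG (t, x) := by
    calc (∫ x in cube m,
        (deriv (fun s => u s x * w s x) t - lapE m (fun y => u t y * w t y) x))
        = ∫ x in cube m, (pd vt GG (t, x) - lapE m (fun y => GG (t, y)) x) := by
          simp only [hintegrand]
      _ = (∫ x in cube m, pd vt GG (t, x))
            - ∫ x in cube m, lapE m (fun y => GG (t, y)) x := integral_sub hInt1 hInt2
      _ = ∫ x in cube m, pd vt GG (t, x) := by rw [hzero, sub_zero]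
  rw [hval]
  exact hder
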